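/- arXiv:2006.10277 — 3 statements merged into one kernel-verified Lean document; each statement's English description precedes it below -/
import Mathlib

section
/- Let M and N be positive definite k×k real matrices with M - N positive definite (M ≻ N ≻ 0). Then for every nonzero vector v, (vᵀMv)/(vᵀNv) ≤ det(M)/det(N). -/
open Matrix Finset
open scoped MatrixOrder

lemma congr_form {k : ℕ} {B : Matrix (Fin k) (Fin k) ℝ} (hB : B.IsHermitian)
    (C : Matrix (Fin k) (Fin k) ℝ) (x y : Fin k → ℝ) :
    x ⬝ᵥ (B * C * B).mulVec y = (B.mulVec x) ⬝ᵥ C.mulVec (B.mulVec y) := by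
  have hBt : Bᵀ = B := by
    have := hB.eq
    simpa [conjTranspose_eq_transpose_of_trivial] using this
  rw [← mulVec_mulVec, ← mulVec_mulVec, dotProduct_mulVec x B, ← mulVec_transpose, hBt]

lemma core {k : ℕ} {A : Matrix (Fin k) (Fin k) ℝ} (hA : A.IsHermitian)
    (h1 : (A - 1).PosDef) (w : Fin k → ℝ) :
    w ⬝ᵥ A.mulVec w ≤ A.det * (w ⬝ᵥ w) := by
  set lam := hA.eigenvalues with hlam
  have hgt : ∀ i, 1 < lam i := by
    intro i
    have ht1 : ‖hA.eigenvectorBasis i‖ = 1 := hA.eigenvectorBasis.orthonormal.1 i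
    have htne : (⇑(hA.eigenvectorBasis i) : Fin k → ℝ) ≠ 0 := by
      intro h
      have h0 : hA.eigenvectorBasis i = 0 := by ext j; exact congrFun h j
      rw [h0, norm_zero] at ht1; norm_num at ht1
    have hpos := h1.dotProduct_mulVec_pos htne
    have hdot : (star (⇑(hA.eigenvectorBasis i)) : Fin k → ℝ) ⬝ᵥ (⇑(hA.eigenvectorBasis i)) = 1 := by
      have h2 := EuclideanSpace.inner_eq_star_dotProduct (hA.eigenvectorBasis i) (hA.eigenvectorBasis i)
      rw [real_inner_self_eq_norm_sq, ht1] at h2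
      simpa using h2.symm
    have hev : lam i = (star (⇑(hA.eigenvectorBasis i)) : Fin k → ℝ) ⬝ᵥ
        (A.mulVec (⇑(hA.eigenvectorBasis i))) := by
      simpa using hA.eigenvalues_eq i
    rw [sub_mulVec, dotProduct_sub, one_mulVec, hdot, ← hev] at hpos
    linarith
  have hdet : A.det = ∏ i, lam i := by simpa using hA.det_eq_prod_eigenvalues
  have hle : ∀ i, lam i ≤ A.det := by
    intro i
    rw [hdet, ← Finset.mul_prod_erase univ lam (mem_univ i)]
    have h1' : (1:ℝ) ≤ ∏ j ∈ univ.erase i, lam j := by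
      calc (1:ℝ) = ∏ _j ∈ univ.erase i, (1:ℝ) := by simp
      _ ≤ _ := Finset.prod_le_prod (fun j _ => zero_le_one) (fun j _ => (hgt j).le)
    nlinarith [(hgt i).le, h1']
  have key : A.det • (1 : Matrix (Fin k) (Fin k) ℝ) - A =
      (hA.eigenvectorUnitary : Matrix (Fin k) (Fin k) ℝ) *
        Matrix.diagonal (fun i => A.det - lam i) *
        (hA.eigenvectorUnitary : Matrix (Fin k) (Fin k) ℝ)ᴴ := by
    have hUU : (hA.eigenvectorUnitary : Matrix (Fin k) (Fin k) ℝ) *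
        star (hA.eigenvectorUnitary : Matrix (Fin k) (Fin k) ℝ) = 1 :=
      (Matrix.mem_unitaryGroup_iff).mp hA.eigenvectorUnitary.2
    have hDsplit : Matrix.diagonal (fun i => A.det - lam i) =
        A.det • (1 : Matrix (Fin k) (Fin k) ℝ) -
          Matrix.diagonal (RCLike.ofReal ∘ lam) := by
      ext i j
      rcases eq_or_ne i j with rfl | h
      · simp [Matrix.one_apply_eq, RCLike.ofReal]
      · simp [Matrix.diagonal_apply_ne _ h, Matrix.one_apply_ne h]
    rw [hDsplit, Matrix.mul_sub, Matrix.sub_mul, Matrix.mul_smul, Matrix.mul_one,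
      Matrix.smul_mul, ← Matrix.star_eq_conjTranspose, hUU]
    rw [hlam]
    congr 1
    exact hA.spectral_theorem
  have hdiag : (Matrix.diagonal (fun i => A.det - lam i)).PosSemidef :=
    Matrix.posSemidef_diagonal_iff.mpr fun i => sub_nonneg.mpr (hle i)
  have hpsd : (A.det • (1 : Matrix (Fin k) (Fin k) ℝ) - A).PosSemidef := by
    rw [key]; exact hdiag.mul_mul_conjTranspose_same _
  have h2 := hpsd.dotProduct_mulVec_nonneg w
  simp only [sub_mulVec, dotProduct_sub, smul_mulVec, one_mulVec, dotProduct_smul,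
    star_trivial, smul_eq_mul] at h2
  linarith

lemma conj_hermitian {k : ℕ} {C S : Matrix (Fin k) (Fin k) ℝ} (hC : C.IsHermitian)
    (hS : S⁻¹.IsHermitian) : (S⁻¹ * C * S⁻¹).IsHermitian := by
  have h := isHermitian_mul_mul_conjTranspose S⁻¹ hC
  rwa [hS.eq] at h

theorem stmt_0 {k : ℕ} (M N : Matrix (Fin k) (Fin k) ℝ)
    (hMN : (M - N).PosDef) (hN : N.PosDef) (v : Fin k → ℝ) (hv : v ≠ 0) :
    (v ⬝ᵥ M.mulVec v) / (v ⬝ᵥ N.mulVec v) ≤ M.det / N.det := by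
  have hvNv : 0 < v ⬝ᵥ N.mulVec v := by
    have := hN.dotProduct_mulVec_pos hv
    simpa using this
  set S := CFC.sqrt N with hSdef
  have hS : S.PosSemidef := (CFC.sqrt_nonneg N).posSemidef
  have hSS : S * S = N := CFC.sqrt_mul_sqrt_self N hN.posSemidef.nonneg
  have hdS : S.det * S.det = N.det := by rw [← Matrix.det_mul, hSS]
  have hdSne : S.det ≠ 0 := by
    intro h
    have := hN.det_pos
    rw [← hdS, h, mul_zero] at this
    exact lt_irrefl _ this
  have hSunit : IsUnit S.det := isUnit_iff_ne_zero.mpr hdSne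
  have hSiS : S⁻¹ * S = 1 := Matrix.nonsing_inv_mul S hSunit
  have hSSi : S * S⁻¹ = 1 := Matrix.mul_nonsing_inv S hSunit
  have hSiH : (S⁻¹).IsHermitian := hS.isHermitian.inv
  set A := S⁻¹ * M * S⁻¹ with hAdef
  have hAH : A.IsHermitian := by
    have hM : M.PosDef := by
      have := hMN.add hN
      rwa [sub_add_cancel] at this
    exact conj_hermitian hM.isHermitian hSiH
  have hA1 : A - 1 = S⁻¹ * (M - N) * S⁻¹ := by
    rw [Matrix.mul_sub, Matrix.sub_mul, hAdef]
    congr 1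
    rw [← hSS]
    have h2 : S⁻¹ * (S * S) * S⁻¹ = (S⁻¹ * S) * (S * S⁻¹) := by noncomm_ring
    rw [h2, hSiS, hSSi, one_mul]
  have hA1pd : (A - 1).PosDef := by
    rw [hA1]
    refine Matrix.PosDef.of_dotProduct_mulVec_pos (conj_hermitian hMN.isHermitian hSiH) (fun x hx => ?_)
    have hx' : S⁻¹.mulVec x ≠ 0 := by
      intro h
      apply hx
      have h2 := congrArg S.mulVec h
      rwa [Matrix.mulVec_mulVec, hSSi, Matrix.one_mulVec, Matrix.mulVec_zero] at h2
    have hp := hMN.dotProduct_mulVec_pos hx'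
    rw [star_trivial] at hp ⊢
    rwa [congr_form hSiH]
  have hw1 : (S.mulVec v) ⬝ᵥ A.mulVec (S.mulVec v) = v ⬝ᵥ M.mulVec v := by
    rw [hAdef, congr_form hSiH M, Matrix.mulVec_mulVec, hSiS, Matrix.one_mulVec]
  have hw2 : (S.mulVec v) ⬝ᵥ (S.mulVec v) = v ⬝ᵥ N.mulVec v := by
    rw [← hSS, show S * S = S * 1 * S by rw [Matrix.mul_one],
      congr_form hS.isHermitian 1 v v, Matrix.one_mulVec]
  have hdetA : A.det = M.det / N.det := by
    rw [hAdef, Matrix.det_mul, Matrix.det_mul, Matrix.det_nonsing_inv,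
      Ring.inverse_eq_inv]
    rw [← hdS]
    field_simp
  have hcore := core hAH hA1pd (S.mulVec v)
  rw [hw1, hw2, hdetA] at hcore
  exact (div_le_iff₀ hvNv).mpr hcore
end

section
/- Let M be a positive semidefinite matrix, Φ a matrix, and v a vector with vᵀ(ΦᵀΦ)⁻¹v ≥ β, where ΦᵀΦ is positive definite. For any vector Δ, if Δᵀ(ΦᵀΦ)⁻¹Δ ≤ (β/2)(3 − 2√2), then (v − Δ)ᵀ(ΦᵀΦ)⁻¹(v − Δ) ≥ β/2. -/
open Matrix

lemma cs_aux {k : ℕ} {A : Matrix (Fin k) (Fin k) ℝ} (hA : A.PosSemidef)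
    (x y : Fin k → ℝ) :
    (x ⬝ᵥ A.mulVec y) ^ 2 ≤ (x ⬝ᵥ A.mulVec x) * (y ⬝ᵥ A.mulVec y) := by
  have hsymm : ∀ a b : Fin k → ℝ, a ⬝ᵥ A.mulVec b = b ⬝ᵥ A.mulVec a := by
    intro a b
    have hAt : Aᵀ = A := by
      have := hA.isHermitian
      simpa [Matrix.IsHermitian, Matrix.conjTranspose_eq_transpose_of_trivial] using this
    calc a ⬝ᵥ A.mulVec b = (a ᵥ* A) ⬝ᵥ b := Matrix.dotProduct_mulVec _ _ _
      _ = (Aᵀ *ᵥ a) ⬝ᵥ b := by rw [Matrix.mulVec_transpose]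
      _ = (A *ᵥ a) ⬝ᵥ b := by rw [hAt]
      _ = b ⬝ᵥ A.mulVec a := dotProduct_comm _ _
  have key : ∀ t : ℝ, 0 ≤ (y ⬝ᵥ A.mulVec y) * (t * t) + (2 * (x ⬝ᵥ A.mulVec y)) * t
      + (x ⬝ᵥ A.mulVec x) := by
    intro t
    have h0 := hA.dotProduct_mulVec_nonneg (x + t • y)
    simp only [star_trivial] at h0
    have hexp : (x + t • y) ⬝ᵥ A.mulVec (x + t • y)
        = (y ⬝ᵥ A.mulVec y) * (t * t) + (2 * (x ⬝ᵥ A.mulVec y)) * t + (x ⬝ᵥ A.mulVec x) := by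
      rw [Matrix.mulVec_add, Matrix.mulVec_smul, dotProduct_add, add_dotProduct,
        add_dotProduct, dotProduct_smul, smul_dotProduct,
        smul_dotProduct, dotProduct_smul, hsymm y x]
      simp [smul_eq_mul]
      ring
    rw [hexp] at h0
    simpa using h0
  have hd := discrim_le_zero key
  rw [discrim] at hd
  nlinarith [hd]

set_option maxHeartbeats 1000000 in
theorem stmt_4 {T k : ℕ} (Φ : Matrix (Fin T) (Fin k) ℝ)
    (hΦ : (Φᵀ * Φ).PosDef) (β : ℝ) (hβ : 0 < β) (v Δ : Fin k → ℝ)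
    (hv : β ≤ v ⬝ᵥ (Φᵀ * Φ)⁻¹.mulVec v)
    (hΔ : Δ ⬝ᵥ (Φᵀ * Φ)⁻¹.mulVec Δ ≤ β / 2 * (3 - 2 * Real.sqrt 2)) :
    β / 2 ≤ (v - Δ) ⬝ᵥ (Φᵀ * Φ)⁻¹.mulVec (v - Δ) := by
  set A := (Φᵀ * Φ)⁻¹ with hAdef
  have hA : A.PosDef := hΦ.inv
  have hApsd : A.PosSemidef := hA.posSemidef
  set a := v ⬝ᵥ A.mulVec v with ha
  set d := Δ ⬝ᵥ A.mulVec Δ with hdd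
  set c := v ⬝ᵥ A.mulVec Δ with hc
  have hsymm : Δ ⬝ᵥ A.mulVec v = c := by
    have hAt : Aᵀ = A := by
      have := hApsd.isHermitian
      simpa [Matrix.IsHermitian, Matrix.conjTranspose_eq_transpose_of_trivial] using this
    calc Δ ⬝ᵥ A.mulVec v = (Δ ᵥ* A) ⬝ᵥ v := Matrix.dotProduct_mulVec _ _ _
      _ = (Aᵀ *ᵥ Δ) ⬝ᵥ v := by rw [Matrix.mulVec_transpose]
      _ = (A *ᵥ Δ) ⬝ᵥ v := by rw [hAt]
      _ = c := dotProduct_comm _ _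
  have hexp : (v - Δ) ⬝ᵥ A.mulVec (v - Δ) = a - 2 * c + d := by
    rw [Matrix.mulVec_sub, dotProduct_sub, sub_dotProduct,
      sub_dotProduct, hsymm]
    ring
  have hcs : c ^ 2 ≤ a * d := cs_aux hApsd v Δ
  have ha0 : 0 ≤ a := le_trans hβ.le hv
  have hd0 : 0 ≤ d := by simpa using hApsd.dotProduct_mulVec_nonneg Δ
  -- square roots
  set sa := Real.sqrt a with hsa
  set sd := Real.sqrt d with hsd
  set s := Real.sqrt (β / 2) with hs
  set r := Real.sqrt 2 with hr
  have hsa2 : sa ^ 2 = a := Real.sq_sqrt ha0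
  have hsd2 : sd ^ 2 = d := Real.sq_sqrt hd0
  have hs2 : s ^ 2 = β / 2 := Real.sq_sqrt (by linarith)
  have hr2 : r ^ 2 = 2 := Real.sq_sqrt (by norm_num)
  have hsa0 : 0 ≤ sa := Real.sqrt_nonneg _
  have hsd0 : 0 ≤ sd := Real.sqrt_nonneg _
  have hs0 : 0 ≤ s := Real.sqrt_nonneg _
  have hr0 : 0 ≤ r := Real.sqrt_nonneg _
  have hr1 : 1 ≤ r := by nlinarith
  -- c ≤ sa * sd
  have hcle : c ≤ sa * sd := by
    nlinarith [hcs, hsa2, hsd2, mul_nonneg hsa0 hsd0, sq_nonneg (c - sa * sd),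
      sq_nonneg (c + sa * sd)]
  -- sa ≥ s * r
  have hsar : s * r ≤ sa := by
    nlinarith [sq_nonneg (sa - s * r), sq_nonneg (sa + s * r)]
  -- sd ≤ s * (r - 1)
  have hsdr : sd ≤ s * (r - 1) := by
    nlinarith [sq_nonneg (sd - s * (r - 1)), sq_nonneg (sd + s * (r - 1)),
      mul_nonneg hs0 (by linarith : (0:ℝ) ≤ r - 1)]
  rw [hexp]
  nlinarith [sq_nonneg (sa - sd), mul_nonneg hs0 hs0]
end

section
/- Let M₀ be a positive definite k×k matrix with λ_min(M₀) = λ, and let (v_t)_{t≥1} be a sequence of vectors in ℝ^k with ‖v_t‖ ≤ b for all t. Let β > 0. Then the number of indices t ≥ 0 for which v_{t+1}ᵀ(M₀ + ∑_{i=1}^t v_i v_iᵀ)⁻¹ v_{t+1} ≥ β is at most ⌈(2k·log(2k b²/(λ·log(1+β))))/log(1+β)⌉. -/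
open Matrix


variable {k : ℕ}

lemma vmv_psd (w : Fin k → ℝ) : (vecMulVec w w).PosSemidef := by
  rw [vecMulVec_eq Unit]
  have h : (replicateCol Unit w)ᴴ = replicateRow Unit w := by ext i j; simp
  rw [← h]
  simpa using (Matrix.PosSemidef.one (n := Unit) (R := ℝ)).mul_mul_conjTranspose_same (replicateCol Unit w)

lemma sum_vmv_psd (F : Finset ℕ) (w : ℕ → Fin k → ℝ) :
    (∑ s ∈ F, vecMulVec (w s) (w s)).PosSemidef := by
  classical
  induction F using Finset.induction with
  | empty => simpa using Matrix.PosSemidef.zero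
  | insert _ _ h ih => rw [Finset.sum_insert h]; exact (vmv_psd _).add ih

lemma quad_nonneg {A : Matrix (Fin k) (Fin k) ℝ} (hA : A.PosSemidef) (x : Fin k → ℝ) :
    0 ≤ x ⬝ᵥ A *ᵥ x := by simpa using hA.dotProduct_mulVec_nonneg x

lemma quad_sym {A : Matrix (Fin k) (Fin k) ℝ} (hA : A.IsHermitian) (x y : Fin k → ℝ) :
    x ⬝ᵥ A *ᵥ y = y ⬝ᵥ A *ᵥ x := by
  have ht : Aᵀ = A := by
    rw [← conjTranspose_eq_transpose_of_trivial]; exact hA.eq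
  rw [dotProduct_mulVec, ← ht, vecMul_transpose, dotProduct_comm, ht]

lemma inv_quad_anti {A B : Matrix (Fin k) (Fin k) ℝ} (hA : A.PosDef) (hB : B.PosDef)
    (hAB : (B - A).PosSemidef) (w : Fin k → ℝ) :
    w ⬝ᵥ B⁻¹ *ᵥ w ≤ w ⬝ᵥ A⁻¹ *ᵥ w := by
  set x := A⁻¹ *ᵥ w with hx
  set y := B⁻¹ *ᵥ w with hy
  have hAx : A *ᵥ x = w := by
    rw [hx, mulVec_mulVec, Matrix.mul_nonsing_inv _ hA.det_pos.ne'.isUnit, one_mulVec]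
  have hBy : B *ᵥ y = w := by
    rw [hy, mulVec_mulVec, Matrix.mul_nonsing_inv _ hB.det_pos.ne'.isUnit, one_mulVec]
  have hq : 0 ≤ (x - y) ⬝ᵥ A *ᵥ (x - y) := quad_nonneg hA.posSemidef _
  have hexp : (x - y) ⬝ᵥ A *ᵥ (x - y)
      = x ⬝ᵥ A *ᵥ x - 2 * (y ⬝ᵥ A *ᵥ x) + y ⬝ᵥ A *ᵥ y := by
    rw [sub_dotProduct, mulVec_sub, dotProduct_sub, dotProduct_sub,
      quad_sym hA.isHermitian x y]
    ring
  have hyAy : y ⬝ᵥ A *ᵥ y ≤ y ⬝ᵥ B *ᵥ y := by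
    have := quad_nonneg hAB y
    rw [sub_mulVec, dotProduct_sub] at this
    linarith
  have h1 : x ⬝ᵥ A *ᵥ x = w ⬝ᵥ A⁻¹ *ᵥ w := by
    rw [hAx]; rw [dotProduct_comm]
  have h2 : y ⬝ᵥ A *ᵥ x = w ⬝ᵥ B⁻¹ *ᵥ w := by
    rw [hAx]; rw [dotProduct_comm]
  have h3 : y ⬝ᵥ B *ᵥ y = w ⬝ᵥ B⁻¹ *ᵥ w := by
    rw [hBy]; rw [dotProduct_comm]
  nlinarith [hq, hexp, hyAy, h1, h2, h3]

lemma quad_lb {M₀ : Matrix (Fin k) (Fin k) ℝ} {lam : ℝ}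
    (hlam_le : ∀ u : Fin k → ℝ, u ⬝ᵥ u = 1 → lam ≤ u ⬝ᵥ M₀.mulVec u)
    (u : Fin k → ℝ) : lam * (u ⬝ᵥ u) ≤ u ⬝ᵥ M₀ *ᵥ u := by
  rcases eq_or_ne u 0 with rfl | hu
  · simp
  · have h0 : 0 ≤ u ⬝ᵥ u := by simpa using dotProduct_star_self_nonneg u
    have hpos : 0 < u ⬝ᵥ u :=
      lt_of_le_of_ne h0 (fun h => hu (dotProduct_self_eq_zero.mp h.symm))
    set c := Real.sqrt (u ⬝ᵥ u) with hc
    have hcpos : 0 < c := Real.sqrt_pos.mpr hpos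
    have hcc : c * c = u ⬝ᵥ u := Real.mul_self_sqrt h0
    have hu' : (c⁻¹ • u) ⬝ᵥ (c⁻¹ • u) = 1 := by
      rw [smul_dotProduct, dotProduct_smul, smul_eq_mul, smul_eq_mul, ← hcc]
      field_simp
    have := hlam_le (c⁻¹ • u) hu'
    rw [mulVec_smul, smul_dotProduct, dotProduct_smul, smul_eq_mul, smul_eq_mul] at this
    have h2 : lam * (c * c) ≤ c⁻¹ * (c⁻¹ * (u ⬝ᵥ M₀ *ᵥ u)) * (c * c) := by
      nlinarith [mul_pos hcpos hcpos]
    calc lam * (u ⬝ᵥ u) = lam * (c * c) := by rw [hcc]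
    _ ≤ c⁻¹ * (c⁻¹ * (u ⬝ᵥ M₀ *ᵥ u)) * (c * c) := h2
    _ = u ⬝ᵥ M₀ *ᵥ u := by field_simp

lemma inv_quad_ub {M₀ : Matrix (Fin k) (Fin k) ℝ} (hM₀ : M₀.PosDef) {lam : ℝ}
    (hlam_pos : 0 < lam)
    (hlam_le : ∀ u : Fin k → ℝ, u ⬝ᵥ u = 1 → lam ≤ u ⬝ᵥ M₀.mulVec u)
    (w : Fin k → ℝ) : w ⬝ᵥ M₀⁻¹ *ᵥ w ≤ (w ⬝ᵥ w) / lam := by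
  set y := M₀⁻¹ *ᵥ w with hy
  have hMy : M₀ *ᵥ y = w := by
    rw [hy, mulVec_mulVec, Matrix.mul_nonsing_inv _ hM₀.det_pos.ne'.isUnit, one_mulVec]
  have hs_eq : w ⬝ᵥ M₀⁻¹ *ᵥ w = y ⬝ᵥ M₀ *ᵥ y := by
    rw [← hy, ← hMy, dotProduct_comm]
  have h1 : lam * (y ⬝ᵥ y) ≤ w ⬝ᵥ M₀⁻¹ *ᵥ w := hs_eq ▸ quad_lb hlam_le y
  have hsy : w ⬝ᵥ M₀⁻¹ *ᵥ w = y ⬝ᵥ w := by rw [← hy, dotProduct_comm]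
  have hCS : (y ⬝ᵥ w) ^ 2 ≤ (y ⬝ᵥ y) * (w ⬝ᵥ w) := by
    have := Finset.sum_mul_sq_le_sq_mul_sq Finset.univ y w
    simpa [dotProduct, sq, Finset.mul_sum] using this
  have hsnn : 0 ≤ w ⬝ᵥ M₀⁻¹ *ᵥ w := by
    rw [hs_eq]; exact quad_nonneg hM₀.posSemidef y
  have h0w : 0 ≤ w ⬝ᵥ w := by simpa using dotProduct_star_self_nonneg w
  have hCS' : (w ⬝ᵥ M₀⁻¹ *ᵥ w) ^ 2 ≤ (y ⬝ᵥ y) * (w ⬝ᵥ w) := by rw [hsy]; exact hCS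
  rcases eq_or_lt_of_le hsnn with h | h
  · rw [← h]; exact div_nonneg h0w hlam_pos.le
  · rw [le_div_iff₀ hlam_pos]
    nlinarith [mul_le_mul_of_nonneg_right h1 h0w,
      mul_le_mul_of_nonneg_left hCS' hlam_pos.le, h]

lemma det_rank_one_update {A : Matrix (Fin k) (Fin k) ℝ} (hA : A.PosDef) (w : Fin k → ℝ) :
    (A + vecMulVec w w).det = A.det * (1 + w ⬝ᵥ A⁻¹ *ᵥ w) := by
  rw [vecMulVec_eq Unit, Matrix.det_add_replicateCol_mul_replicateRow hA.det_pos.ne'.isUnit]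
  congr 1
  rw [det_unique]
  have hsym : ∀ i j, A⁻¹ i j = A⁻¹ j i := fun i j => by
    have := congrFun (congrFun hA.inv.isHermitian j) i
    simpa using this
  simp only [Matrix.mul_apply, Matrix.replicateRow_apply, Matrix.replicateCol_apply, dotProduct, mulVec,
    Finset.mul_sum, Finset.sum_mul, Matrix.add_apply, Matrix.one_apply_eq]
  congr 1
  refine Finset.sum_congr rfl fun x _ => Finset.sum_congr rfl fun i _ => ?_
  rw [hsym i x]
  ring

lemma trace_vmv_mul (u : Fin k → ℝ) (B : Matrix (Fin k) (Fin k) ℝ) :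
    (vecMulVec u u * B).trace = u ⬝ᵥ B *ᵥ u := by
  simp only [Matrix.trace, Matrix.diag_apply, Matrix.mul_apply, vecMulVec_apply,
    dotProduct, mulVec]
  rw [Finset.sum_comm]
  refine Finset.sum_congr rfl fun j _ => ?_
  rw [Finset.mul_sum]
  refine Finset.sum_congr rfl fun i _ => ?_
  ring

lemma trace_eq_sum_eigs {A : Matrix (Fin k) (Fin k) ℝ} (hA : A.IsHermitian) :
    A.trace = ∑ i, hA.eigenvalues i := by
  simpa using hA.trace_eq_sum_eigenvalues

lemma det_le_trace_pow {A : Matrix (Fin k) (Fin k) ℝ} (hA : A.PosSemidef) (hk : k ≠ 0) :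
    A.det ≤ (A.trace / k) ^ k := by
  set μ := hA.isHermitian.eigenvalues with hμ
  have hnn : ∀ i, 0 ≤ μ i := hA.eigenvalues_nonneg
  have hdet : A.det = ∏ i, μ i := by simpa using hA.isHermitian.det_eq_prod_eigenvalues
  have hkR : (0:ℝ) < (k:ℝ) := by exact_mod_cast Nat.pos_of_ne_zero hk
  have hw : ∀ i ∈ (Finset.univ : Finset (Fin k)), (0:ℝ) ≤ (k:ℝ)⁻¹ := fun _ _ => by positivity
  have hw' : ∑ _i : Fin k, (k:ℝ)⁻¹ = 1 := by
    simp [Finset.sum_const]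
    field_simp
  have hgm := Real.geom_mean_le_arith_mean_weighted Finset.univ (fun _ => (k:ℝ)⁻¹) μ hw hw'
    (fun i _ => hnn i)
  have hprod : ∏ i, μ i ^ ((k:ℝ)⁻¹) = (∏ i, μ i) ^ ((k:ℝ)⁻¹) := by
    rw [← Real.finset_prod_rpow Finset.univ μ (fun i _ => hnn i)]
  have hx : (0:ℝ) ≤ ∏ i, μ i := Finset.prod_nonneg fun i _ => hnn i
  have hS : ∑ i, (k:ℝ)⁻¹ * μ i = A.trace / k := by
    rw [trace_eq_sum_eigs hA.isHermitian, ← hμ, ← Finset.mul_sum]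
    ring
  have key : (∏ i, μ i) ^ ((k:ℝ)⁻¹) ≤ A.trace / k := by
    rw [← hprod, ← hS]; exact hgm
  have h2 : ((∏ i, μ i) ^ ((k:ℝ)⁻¹)) ^ (k:ℝ) ≤ (A.trace / k) ^ (k:ℝ) :=
    Real.rpow_le_rpow (Real.rpow_nonneg hx _) key hkR.le
  have h3 : ((∏ i, μ i) ^ ((k:ℝ)⁻¹)) ^ (k:ℝ) = ∏ i, μ i := by
    rw [← Real.rpow_mul hx, inv_mul_cancel₀ hkR.ne', Real.rpow_one]
  rw [hdet, ← Real.rpow_natCast (A.trace / (k:ℝ)) k]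
  exact h3 ▸ h2

lemma det_factor {M S : Matrix (Fin k) (Fin k) ℝ} (hM : M.PosDef) (hS : S.PosSemidef) :
    ∃ C : Matrix (Fin k) (Fin k) ℝ, C.PosSemidef ∧
      (M + S).det = M.det * (1 + C).det ∧ C.trace = (S * M⁻¹).trace := by
  have hMinv : M⁻¹.PosDef := hM.inv
  obtain ⟨R, hRR, hRpsd⟩ : ∃ R : Matrix (Fin k) (Fin k) ℝ, R * R = M⁻¹ ∧ R.PosSemidef := by
    open scoped MatrixOrder in
    exact ⟨CFC.sqrt M⁻¹, CFC.sqrt_mul_sqrt_self _ hMinv.posSemidef.nonneg,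
      (CFC.sqrt_nonneg _).posSemidef⟩
  have hRH : Rᴴ = R := hRpsd.isHermitian
  have hdetR : R.det * R.det = M⁻¹.det := by rw [← Matrix.det_mul, hRR]
  have hMdet : M.det ≠ 0 := hM.det_pos.ne'
  have hMinvdet : M⁻¹.det ≠ 0 := hMinv.det_pos.ne'
  have hRdet : R.det ≠ 0 := by
    intro h; rw [h, mul_zero] at hdetR; exact hMinvdet hdetR.symm
  have hRiR : R⁻¹ * R = 1 := Matrix.nonsing_inv_mul R hRdet.isUnit
  have hRRi : R * R⁻¹ = 1 := Matrix.mul_nonsing_inv R hRdet.isUnit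
  have hMval : R⁻¹ * R⁻¹ = M := by
    rw [← Matrix.mul_inv_rev, hRR, Matrix.nonsing_inv_nonsing_inv _ hMdet.isUnit]
  refine ⟨R * S * R, ?_, ?_, ?_⟩
  · have := hS.mul_mul_conjTranspose_same R
    rwa [hRH] at this
  · have hid : R⁻¹ * (1 + R * S * R) * R⁻¹ = M + S := by
      rw [Matrix.mul_add, Matrix.mul_one, Matrix.add_mul, hMval]
      congr 1
      calc R⁻¹ * (R * S * R) * R⁻¹ = (R⁻¹ * R) * S * (R * R⁻¹) := by
            simp only [Matrix.mul_assoc]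
      _ = S := by rw [hRiR, hRRi, Matrix.one_mul, Matrix.mul_one]
    rw [← hid, Matrix.det_mul, Matrix.det_mul]
    rw [show R⁻¹.det * (1 + R * S * R).det * R⁻¹.det
        = (R⁻¹.det * R⁻¹.det) * (1 + R * S * R).det by ring, ← Matrix.det_mul, hMval]
  · rw [Matrix.trace_mul_comm, ← Matrix.mul_assoc, Matrix.trace_mul_comm (R * R) S, hRR,
      Matrix.trace_mul_comm]

variable {M₀ : Matrix (Fin k) (Fin k) ℝ} {v : ℕ → (Fin k → ℝ)}

noncomputable def NN (M₀ : Matrix (Fin k) (Fin k) ℝ) (v : ℕ → (Fin k → ℝ)) (F : Finset ℕ) :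
    Matrix (Fin k) (Fin k) ℝ :=
  M₀ + ∑ s ∈ F, vecMulVec (v (s+1)) (v (s+1))

lemma NN_posdef (hM₀ : M₀.PosDef) (F : Finset ℕ) : (NN M₀ v F).PosDef :=
  hM₀.add_posSemidef (sum_vmv_psd F _)

lemma NN_mono (hFG : F ⊆ G) : (NN M₀ v G - NN M₀ v F).PosSemidef := by
  have : NN M₀ v G - NN M₀ v F
      = ∑ s ∈ G \ F, vecMulVec (v (s+1)) (v (s+1)) := by
    unfold NN
    rw [add_sub_add_left_eq_sub, sub_eq_iff_eq_add, eq_comm]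
    exact Finset.sum_sdiff hFG
  rw [this]
  exact sum_vmv_psd _ _

lemma det_lower (hM₀ : M₀.PosDef) {β : ℝ} (hβ : 0 < β) :
    ∀ (m : ℕ) (F : Finset ℕ), F.card = m →
      (∀ t ∈ F, β ≤ v (t+1) ⬝ᵥ (NN M₀ v (F.filter (fun s => s < t)))⁻¹ *ᵥ v (t+1)) →
      M₀.det * (1+β)^m ≤ (NN M₀ v F).det := by
  intro m
  induction m with
  | zero =>
    intro F hF _
    rw [Finset.card_eq_zero.mp hF]
    simp [NN]
  | succ m ih =>
    intro F hF hyp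
    have hne : F.Nonempty := Finset.card_pos.mp (by omega)
    set t' := F.max' hne with ht'
    have ht'F : t' ∈ F := F.max'_mem hne
    set F' := F.erase t' with hF'
    have hcard : F'.card = m := by rw [hF', Finset.card_erase_of_mem ht'F, hF]; omega
    have hfilt : ∀ t ∈ F', F'.filter (fun s => s < t) = F.filter (fun s => s < t) := by
      intro t ht
      ext s
      simp only [Finset.mem_filter, hF', Finset.mem_erase]
      constructor
      · rintro ⟨⟨_, hs⟩, hlt⟩; exact ⟨hs, hlt⟩
      · rintro ⟨hs, hlt⟩
        refine ⟨⟨?_, hs⟩, hlt⟩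
        rintro rfl
        exact absurd (F.le_max' t (Finset.mem_of_mem_erase ht)) (not_le.mpr hlt)
    have hyp' : ∀ t ∈ F', β ≤ v (t+1) ⬝ᵥ (NN M₀ v (F'.filter (fun s => s < t)))⁻¹ *ᵥ v (t+1) := by
      intro t ht
      rw [hfilt t ht]
      exact hyp t (Finset.mem_of_mem_erase ht)
    have hIH := ih F' hcard hyp'
    have hfilt' : F.filter (fun s => s < t') = F' := by
      ext s
      simp only [Finset.mem_filter, hF', Finset.mem_erase]
      constructor
      · rintro ⟨hs, hlt⟩; exact ⟨hlt.ne, hs⟩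
      · rintro ⟨hne', hs⟩; exact ⟨hs, lt_of_le_of_ne (F.le_max' s hs) hne'⟩
    have hsplit : NN M₀ v F = NN M₀ v F' + vecMulVec (v (t'+1)) (v (t'+1)) := by
      unfold NN
      rw [add_assoc]
      congr 1
      rw [hF', Finset.sum_erase_add F _ ht'F]
    have hPD' : (NN M₀ v F').PosDef := NN_posdef hM₀ F'
    have hdetstep : (NN M₀ v F).det
        = (NN M₀ v F').det * (1 + v (t'+1) ⬝ᵥ (NN M₀ v F')⁻¹ *ᵥ v (t'+1)) := by
      rw [hsplit, det_rank_one_update hPD']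
    have hb : β ≤ v (t'+1) ⬝ᵥ (NN M₀ v F')⁻¹ *ᵥ v (t'+1) := by
      have := hyp t' ht'F
      rwa [hfilt'] at this
    have hdet'pos : 0 < (NN M₀ v F').det := hPD'.det_pos
    calc M₀.det * (1+β)^(m+1) = (M₀.det * (1+β)^m) * (1+β) := by ring
    _ ≤ (NN M₀ v F').det * (1+β) := by
        apply mul_le_mul_of_nonneg_right hIH (by linarith)
    _ ≤ (NN M₀ v F').det * (1 + v (t'+1) ⬝ᵥ (NN M₀ v F')⁻¹ *ᵥ v (t'+1)) := by
        apply mul_le_mul_of_nonneg_left (by linarith) hdet'pos.le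
    _ = (NN M₀ v F).det := hdetstep.symm

lemma det_upper (hM₀ : M₀.PosDef) {lam : ℝ} (hlam_pos : 0 < lam)
    (hlam_le : ∀ u : Fin k → ℝ, u ⬝ᵥ u = 1 → lam ≤ u ⬝ᵥ M₀.mulVec u)
    {b : ℝ} (hv : ∀ t, Real.sqrt (v t ⬝ᵥ v t) ≤ b) (hk : k ≠ 0) (F : Finset ℕ) :
    (NN M₀ v F).det ≤ M₀.det * (1 + F.card * b^2 / (k * lam))^k := by
  have hkR : (0:ℝ) < (k:ℝ) := by exact_mod_cast Nat.pos_of_ne_zero hk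
  have hwb : ∀ t, v t ⬝ᵥ v t ≤ b^2 := by
    intro t
    have h0 : 0 ≤ v t ⬝ᵥ v t := by simpa using dotProduct_star_self_nonneg (v t)
    have h1 : Real.sqrt (v t ⬝ᵥ v t) ^ 2 ≤ b ^ 2 := by
      have hb0 : 0 ≤ b := le_trans (Real.sqrt_nonneg _) (hv t)
      exact pow_le_pow_left₀ (Real.sqrt_nonneg _) (hv t) 2
    rwa [Real.sq_sqrt h0] at h1
  obtain ⟨C, hCpsd, hdet, htr⟩ := det_factor hM₀ (sum_vmv_psd F (fun s => v (s+1)))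
  have htrsum : C.trace = ∑ s ∈ F, v (s+1) ⬝ᵥ M₀⁻¹ *ᵥ v (s+1) := by
    rw [htr, Finset.sum_mul, Matrix.trace_sum]
    exact Finset.sum_congr rfl fun s _ => trace_vmv_mul _ _
  have htr_nonneg : 0 ≤ C.trace := by
    rw [htrsum]
    exact Finset.sum_nonneg fun s _ => quad_nonneg hM₀.inv.posSemidef _
  have htr_ub : C.trace ≤ F.card * (b^2 / lam) := by
    rw [htrsum]
    calc ∑ s ∈ F, v (s+1) ⬝ᵥ M₀⁻¹ *ᵥ v (s+1) ≤ ∑ s ∈ F, (b^2 / lam) := by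
          refine Finset.sum_le_sum fun s _ => ?_
          refine le_trans (inv_quad_ub hM₀ hlam_pos hlam_le _) ?_
          gcongr
          exact hwb _
    _ = F.card * (b^2 / lam) := by rw [Finset.sum_const, nsmul_eq_mul]
  have h1C : (1 + C).PosSemidef := Matrix.PosSemidef.one.add hCpsd
  have hdet1C : (1 + C).det ≤ ((1 + C).trace / k)^k := det_le_trace_pow h1C hk
  have htr1C : (1 + C).trace = k + C.trace := by
    rw [Matrix.trace_add, Matrix.trace_one]; simp
  have hfrac : (1 + C).trace / k ≤ 1 + F.card * b^2 / (k * lam) := by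
    rw [htr1C]
    rw [div_le_iff₀ hkR]
    have : (1 + (F.card : ℝ) * b^2 / (k * lam)) * k = k + F.card * (b^2/lam) := by
      field_simp
    rw [this]
    linarith [htr_ub]
  have hfrac0 : 0 ≤ (1 + C).trace / k := by
    rw [htr1C]; positivity
  calc (NN M₀ v F).det = M₀.det * (1 + C).det := hdet
  _ ≤ M₀.det * ((1 + C).trace / k)^k :=
      mul_le_mul_of_nonneg_left hdet1C hM₀.det_pos.le
  _ ≤ M₀.det * (1 + F.card * b^2 / (k * lam))^k := by
      exact mul_le_mul_of_nonneg_left (pow_le_pow_left₀ hfrac0 hfrac k) hM₀.det_pos.le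

lemma final_count {K lam b L : ℝ} (hK : 1 ≤ K) (hlam : 0 < lam) (hb : 0 < b) (hL : 0 < L)
    (hnd : L ≤ 2*K*b^2/lam) (m : ℕ)
    (hineq : m * L ≤ K * Real.log (1 + m * b^2 / (K*lam))) :
    (m:ℝ) ≤ 2*K*Real.log (2*K*b^2/(lam*L)) / L := by
  have hK0 : (0:ℝ) < K := lt_of_lt_of_le one_pos hK
  set c := 2*K*b^2/(lam*L) with hc
  have hcpos : 0 < c := by positivity
  set x := 1 + (m:ℝ) * b^2 / (K*lam) with hx
  have hxpos : 0 < x := by positivity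
  have h1 : Real.log x ≤ x/c + Real.log c - 1 := by
    have h0 := Real.log_le_sub_one_of_pos (show 0 < x/c by positivity)
    rw [Real.log_div hxpos.ne' hcpos.ne'] at h0
    linarith
  have h2 : K * (x/c) = lam*L/(2*b^2) + m*L/(2*K) := by
    rw [hx, hc]
    field_simp
  have h3 : lam*L/(2*b^2) ≤ K := by
    rw [div_le_iff₀ (by positivity)]
    rw [le_div_iff₀ hlam] at hnd
    nlinarith
  have h4 : (m:ℝ)*L/(2*K) ≤ m*L/2 :=
    div_le_div_of_nonneg_left (by positivity) two_pos (by linarith)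
  have h5 : (m:ℝ)*L ≤ K*(x/c) + K*Real.log c - K := by
    have := mul_le_mul_of_nonneg_left h1 hK0.le
    calc (m:ℝ)*L ≤ K * Real.log x := hineq
    _ ≤ K*(x/c + Real.log c - 1) := this
    _ = K*(x/c) + K*Real.log c - K := by ring
  rw [le_div_iff₀ hL]
  nlinarith [h2, h3, h4, h5]

lemma sub_sum_vmv_psd {F G : Finset ℕ} (w : ℕ → Fin k → ℝ) (hFG : F ⊆ G) :
    (∑ i ∈ G, vecMulVec (w i) (w i) - ∑ i ∈ F, vecMulVec (w i) (w i)).PosSemidef := by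
  have h : ∑ i ∈ G, vecMulVec (w i) (w i) - ∑ i ∈ F, vecMulVec (w i) (w i)
      = ∑ i ∈ G \ F, vecMulVec (w i) (w i) := by
    rw [sub_eq_iff_eq_add, eq_comm]
    exact Finset.sum_sdiff hFG
  rw [h]
  exact sum_vmv_psd _ _

open Classical in
/-- Proposition 2 (elliptic potential counting). `lam` is the minimum
eigenvalue of `M₀`, expressed via the quadratic form over unit vectors. -/
theorem stmt_9 {k : ℕ} (M₀ : Matrix (Fin k) (Fin k) ℝ) (hM₀ : M₀.PosDef)
    (lam : ℝ) (hlam_pos : 0 < lam)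
    (hlam_le : ∀ u : Fin k → ℝ, u ⬝ᵥ u = 1 → lam ≤ u ⬝ᵥ M₀.mulVec u)
    (hlam_eq : ∃ u : Fin k → ℝ, u ⬝ᵥ u = 1 ∧ u ⬝ᵥ M₀.mulVec u = lam)
    (b : ℝ) (v : ℕ → (Fin k → ℝ)) (hv : ∀ t, Real.sqrt (v t ⬝ᵥ v t) ≤ b)
    (β : ℝ) (hβ : 0 < β) (T : ℕ) :
    ((Finset.range T).filter (fun t =>
        β ≤ v (t + 1) ⬝ᵥ (M₀ + ∑ i ∈ Finset.Icc 1 t, vecMulVec (v i) (v i))⁻¹.mulVec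
              (v (t + 1)))).card
      ≤ ⌈2 * k * Real.log (2 * k * b ^ 2 / (lam * Real.log (1 + β)))
          / Real.log (1 + β)⌉₊ := by
  by_cases hk : k = 0
  · subst hk
    have hnone : ∀ t ∈ Finset.range T, ¬ (β ≤ v (t + 1) ⬝ᵥ
        (M₀ + ∑ i ∈ Finset.Icc 1 t, vecMulVec (v i) (v i))⁻¹.mulVec (v (t + 1))) := by
      intro t _
      have : v (t + 1) ⬝ᵥ (M₀ + ∑ i ∈ Finset.Icc 1 t, vecMulVec (v i) (v i))⁻¹.mulVec
          (v (t + 1)) = 0 := by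
        simp [dotProduct]
      rw [this]
      linarith
    rw [Finset.filter_false_of_mem hnone]
    simp
  have hb0 : 0 ≤ b := le_trans (Real.sqrt_nonneg _) (hv 0)
  by_cases hbz : b = 0
  · have hvz : ∀ t, v t = 0 := by
      intro t
      have h1 := hv t
      rw [hbz] at h1
      have h0 : 0 ≤ v t ⬝ᵥ v t := by simpa using dotProduct_star_self_nonneg (v t)
      have h2 : Real.sqrt (v t ⬝ᵥ v t) = 0 := le_antisymm h1 (Real.sqrt_nonneg _)
      exact dotProduct_self_eq_zero.mp ((Real.sqrt_eq_zero h0).mp h2)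
    have hnone : ∀ t ∈ Finset.range T, ¬ (β ≤ v (t + 1) ⬝ᵥ
        (M₀ + ∑ i ∈ Finset.Icc 1 t, vecMulVec (v i) (v i))⁻¹.mulVec (v (t + 1))) := by
      intro t _
      rw [hvz (t+1)]
      simp
      linarith
    rw [Finset.filter_false_of_mem hnone]
    simp
  have hbpos : 0 < b := lt_of_le_of_ne hb0 (Ne.symm hbz)
  have hk1 : (1:ℝ) ≤ (k:ℝ) := by exact_mod_cast Nat.one_le_iff_ne_zero.mpr hk
  set L := Real.log (1 + β) with hLdef
  have hLpos : 0 < L := Real.log_pos (by linarith)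
  set S := (Finset.range T).filter (fun t =>
      β ≤ v (t + 1) ⬝ᵥ (M₀ + ∑ i ∈ Finset.Icc 1 t, vecMulVec (v i) (v i))⁻¹.mulVec
        (v (t + 1))) with hSdef
  -- positive definiteness of the running matrices
  have hPt : ∀ t : ℕ, (M₀ + ∑ i ∈ Finset.Icc 1 t, vecMulVec (v i) (v i)).PosDef :=
    fun t => hM₀.add_posSemidef (sum_vmv_psd _ _)
  -- the key hypothesis for det_lower
  have hkey : ∀ t ∈ S, β ≤ v (t+1) ⬝ᵥ (NN M₀ v (S.filter (fun s => s < t)))⁻¹ *ᵥ v (t+1) := by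
    intro t ht
    have htq : β ≤ v (t + 1) ⬝ᵥ (M₀ + ∑ i ∈ Finset.Icc 1 t, vecMulVec (v i) (v i))⁻¹ *ᵥ
        (v (t + 1)) := (Finset.mem_filter.mp ht).2
    set F := (S.filter (fun s => s < t)).image (· + 1) with hFdef
    have hFsub : F ⊆ Finset.Icc 1 t := by
      intro i hi
      rw [hFdef] at hi
      obtain ⟨s, hs, rfl⟩ := Finset.mem_image.mp hi
      have := (Finset.mem_filter.mp hs).2
      simp only [Finset.mem_Icc]
      omega
    have hNNeq : NN M₀ v (S.filter (fun s => s < t))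
        = M₀ + ∑ i ∈ F, vecMulVec (v i) (v i) := by
      unfold NN
      congr 1
      rw [hFdef, Finset.sum_image (fun x _ y _ h => by omega)]
    have hpsd : ((M₀ + ∑ i ∈ Finset.Icc 1 t, vecMulVec (v i) (v i))
        - NN M₀ v (S.filter (fun s => s < t))).PosSemidef := by
      rw [hNNeq, add_sub_add_left_eq_sub]
      exact sub_sum_vmv_psd v hFsub
    refine le_trans htq ?_
    exact inv_quad_anti (NN_posdef hM₀ _) (hPt t) hpsd _
  set m := S.card with hm
  by_cases hnd : L ≤ 2*(k:ℝ)*b^2/lam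
  · -- main case
    have hlow := det_lower hM₀ hβ m S hm.symm hkey
    have hupp := det_upper hM₀ hlam_pos hlam_le hv hk S
    have hupp' : (NN M₀ v S).det ≤ M₀.det * (1 + (m:ℝ) * b^2/((k:ℝ)*lam))^k := by
      rw [hm]; exact hupp
    have hchain : (1+β)^m ≤ (1 + (m:ℝ) * b^2 / ((k:ℝ) * lam))^k :=
      le_of_mul_le_mul_left (le_trans hlow hupp') hM₀.det_pos
    have h1β : (0:ℝ) < 1 + β := by linarith
    have hxp : (0:ℝ) < 1 + m * b^2 / (k * lam) := by positivity
    have hlog : (m:ℝ) * L ≤ k * Real.log (1 + m * b^2 / ((k:ℝ) * lam)) := by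
      have := Real.log_le_log (pow_pos h1β m) hchain
      rwa [Real.log_pow, Real.log_pow] at this
    have hfc := final_count hk1 hlam_pos hbpos hLpos hnd m hlog
    calc m = ⌈(m:ℝ)⌉₊ := (Nat.ceil_natCast m).symm
    _ ≤ ⌈2 * (k:ℝ) * Real.log (2 * k * b ^ 2 / (lam * L)) / L⌉₊ := Nat.ceil_mono hfc
  · -- degenerate case : no bad rounds at all
    have hSempty : S = ∅ := by
      rw [Finset.eq_empty_iff_forall_notMem]
      intro t ht
      have htq : β ≤ v (t + 1) ⬝ᵥ (M₀ + ∑ i ∈ Finset.Icc 1 t, vecMulVec (v i) (v i))⁻¹ *ᵥ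
          (v (t + 1)) := (Finset.mem_filter.mp ht).2
      have hpsd : ((M₀ + ∑ i ∈ Finset.Icc 1 t, vecMulVec (v i) (v i)) - M₀).PosSemidef := by
        rw [add_sub_cancel_left]
        exact sum_vmv_psd _ _
      have h2 := inv_quad_anti hM₀ (hPt t) hpsd (v (t+1))
      have h3 := inv_quad_ub hM₀ hlam_pos hlam_le (v (t+1))
      have hwb : v (t+1) ⬝ᵥ v (t+1) ≤ b^2 := by
        have h0 : 0 ≤ v (t+1) ⬝ᵥ v (t+1) := by simpa using dotProduct_star_self_nonneg (v (t+1))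
        have h1 : Real.sqrt (v (t+1) ⬝ᵥ v (t+1)) ^ 2 ≤ b ^ 2 :=
          pow_le_pow_left₀ (Real.sqrt_nonneg _) (hv (t+1)) 2
        rwa [Real.sq_sqrt h0] at h1
      have h4 : (v (t+1) ⬝ᵥ v (t+1))/lam ≤ b^2/lam := by gcongr
      have hLβ : L ≤ β := by
        have := Real.log_le_sub_one_of_pos (show (0:ℝ) < 1+β by linarith)
        rw [hLdef]
        linarith
      push_neg at hnd
      have hbl : (0:ℝ) < b^2/lam := by positivity
      have h5 : 1*(b^2/lam) ≤ (k:ℝ)*(b^2/lam) := mul_le_mul_of_nonneg_right hk1 hbl.le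
      have hβx : β ≤ b^2/lam := le_trans htq (le_trans h2 (le_trans h3 h4))
      have hr : 2*(k:ℝ)*b^2/lam = 2*((k:ℝ)*(b^2/lam)) := by ring
      rw [hr] at hnd
      linarith [h5, hbl, hLβ, hnd, hβx]
    have hm0 : m = 0 := by rw [hm, hSempty, Finset.card_empty]
    rw [hm0]
    exact Nat.zero_le _
end
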